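/- For the Invincible Fighter (u = 1), for fixed n ≥ 2 and each j = 1, …, n−1, the equation N_n(j+1,t) = N_n(j,t) has a unique solution t(n,j) ∈ (0,∞); moreover N_n(j+1,t) > N_n(j,t) for 0 ≤ t < t(n,j) and N_n(j+1,t) < N_n(j,t) for t > t(n,j). -/

import Mathlib

open Real MeasureTheory Filter Topology

/-- Auxiliary history-based recursion: `Nhist a u n m t` equals `N(m,t)` when `m ≤ n`. -/
noncomputable def Nhist (a : ℕ → ℝ) (u : ℝ) : ℕ → ℕ → ℝ → ℝ
  | 0, _, _ => 0
  | n + 1, m, t =>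
      if m ≤ n then Nhist a u n m t
      else (Finset.Icc 1 (n + 1)).sup'
          (Finset.nonempty_Icc.mpr (Nat.succ_le_succ (Nat.zero_le n)))
          (fun j => a j + (a j * (1 - u) + u) *
            (Real.exp (-t) * ∫ x in (0:ℝ)..t, Nhist a u n (n + 1 - j) x * Real.exp x))

/-- `Nval a u n t` is `N(n,t)`, the optimal expected number of enemy planes shot down,
with `N(0,t) = 0` and `N(n,t) = max_{1 ≤ j ≤ n} N_n(j,t)`. -/
noncomputable def Nval (a : ℕ → ℝ) (u : ℝ) (n : ℕ) (t : ℝ) : ℝ :=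
  Nhist a u n n t

/-- `Nstar a u r t` is `N*(r,t) = e^{-t} ∫_0^t N(r,x) e^x dx` (so `N*(0,t) = 0`). -/
noncomputable def Nstar (a : ℕ → ℝ) (u : ℝ) (r : ℕ) (t : ℝ) : ℝ :=
  Real.exp (-t) * ∫ x in (0:ℝ)..t, Nval a u r x * Real.exp x

/-- `Nalloc a u n j t` is `N_n(j,t) = a(j) + c(j)·N*(n-j,t)` where `c(j) = a(j)(1-u)+u`. -/
noncomputable def Nalloc (a : ℕ → ℝ) (u : ℝ) (n j : ℕ) (t : ℝ) : ℝ :=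
  a j + (a j * (1 - u) + u) * Nstar a u (n - j) t

/-- `Kopt a u n t = min { j ∈ {1,…,n} : N_n(j,t) = N(n,t) }`. -/
noncomputable def Kopt (a : ℕ → ℝ) (u : ℝ) (n : ℕ) (t : ℝ) : ℕ :=
  sInf {j : ℕ | 1 ≤ j ∧ j ≤ n ∧ Nalloc a u n j t = Nval a u n t}

namespace IF

lemma hist_stable (a : ℕ → ℝ) (u : ℝ) : ∀ n m, m ≤ n → ∀ t, Nhist a u n m t = Nhist a u m m t := by
  intro n
  induction n with
  | zero => intro m hm t; interval_cases m; rfl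
  | succ n ihn =>
    intro m hm t
    rcases Nat.lt_or_ge m (n+1) with h | h
    · have hmn : m ≤ n := Nat.lt_succ_iff.mp h
      have : Nhist a u (n+1) m t = Nhist a u n m t := by
        rw [Nhist]; simp [hmn]
      rw [this, ihn m hmn t]
    · have : m = n + 1 := le_antisymm hm h
      subst this; rfl

lemma Nval_zero (a : ℕ → ℝ) (u : ℝ) (t : ℝ) : Nval a u 0 t = 0 := rfl

lemma Nstar_zero (a : ℕ → ℝ) (u : ℝ) (t : ℝ) : Nstar a u 0 t = 0 := by
  simp [Nstar, Nval_zero]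

lemma Nstar_at_zero (a : ℕ → ℝ) (u : ℝ) (r : ℕ) : Nstar a u r 0 = 0 := by
  simp [Nstar]

lemma Nval_succ (a : ℕ → ℝ) (u : ℝ) (n : ℕ) (t : ℝ) :
    Nval a u (n+1) t = (Finset.Icc 1 (n+1)).sup'
      (Finset.nonempty_Icc.mpr (Nat.succ_le_succ (Nat.zero_le n)))
      (fun j => Nalloc a u (n+1) j t) := by
  have h0 : Nval a u (n+1) t = (Finset.Icc 1 (n+1)).sup'
      (Finset.nonempty_Icc.mpr (Nat.succ_le_succ (Nat.zero_le n)))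
      (fun j => a j + (a j * (1 - u) + u) *
        (Real.exp (-t) * ∫ x in (0:ℝ)..t, Nhist a u n (n + 1 - j) x * Real.exp x)) := by
    show Nhist a u (n+1) (n+1) t = _
    rw [Nhist]; simp
  rw [h0]
  apply Finset.sup'_congr _ rfl
  intro j hj
  simp only [Finset.mem_Icc] at hj
  have hle : n + 1 - j ≤ n := by omega
  have hx : ∀ x, Nhist a u n (n + 1 - j) x = Nval a u (n + 1 - j) x := by
    intro x; rw [hist_stable a u n (n+1-j) hle x]; rfl
  simp only [hx]
  rfl

lemma Nalloc_one (a : ℕ → ℝ) (n j : ℕ) (t : ℝ) :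
    Nalloc a 1 n j t = a j + Nstar a 1 (n - j) t := by
  simp [Nalloc]

lemma Nval_succ_one (a : ℕ → ℝ) (n : ℕ) (t : ℝ) :
    Nval a 1 (n+1) t = (Finset.Icc 1 (n+1)).sup'
      (Finset.nonempty_Icc.mpr (Nat.succ_le_succ (Nat.zero_le n)))
      (fun j => a j + Nstar a 1 (n + 1 - j) t) := by
  rw [Nval_succ]
  apply Finset.sup'_congr _ rfl
  intro j hj
  rw [Nalloc_one]

lemma Nval_ge (a : ℕ → ℝ) (n : ℕ) (t : ℝ) {j : ℕ} (hj1 : 1 ≤ j) (hj2 : j ≤ n + 1) :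
    a j + Nstar a 1 (n + 1 - j) t ≤ Nval a 1 (n+1) t := by
  rw [Nval_succ_one]
  exact Finset.le_sup' (fun j => a j + Nstar a 1 (n + 1 - j) t) (Finset.mem_Icc.mpr ⟨hj1, hj2⟩)

lemma Nval_opt (a : ℕ → ℝ) (n : ℕ) (t : ℝ) :
    ∃ j, 1 ≤ j ∧ j ≤ n + 1 ∧ Nval a 1 (n+1) t = a j + Nstar a 1 (n + 1 - j) t := by
  obtain ⟨j, hj, he⟩ := Finset.exists_mem_eq_sup'
    (Finset.nonempty_Icc.mpr (Nat.succ_le_succ (Nat.zero_le n)))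
    (fun j => a j + Nstar a 1 (n + 1 - j) t)
  simp only [Finset.mem_Icc] at hj
  exact ⟨j, hj.1, hj.2, by rw [Nval_succ_one]; exact he⟩

lemma Nval_one (a : ℕ → ℝ) (t : ℝ) : Nval a 1 1 t = a 1 := by
  rw [show (1:ℕ) = 0 + 1 from rfl, Nval_succ_one]
  simp [Nstar_zero]



lemma avg_hasDeriv {f : ℝ → ℝ} (hf : Continuous f) (t : ℝ) :
    HasDerivAt (fun t => Real.exp (-t) * ∫ x in (0:ℝ)..t, f x * Real.exp x)
      (f t - Real.exp (-t) * ∫ x in (0:ℝ)..t, f x * Real.exp x) t := by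
  have hfi : Continuous fun x => f x * Real.exp x := hf.mul Real.continuous_exp
  have h1 : HasDerivAt (fun u => ∫ x in (0:ℝ)..u, f x * Real.exp x) (f t * Real.exp t) t :=
    intervalIntegral.integral_hasDerivAt_right (hfi.intervalIntegrable _ _)
      (hfi.stronglyMeasurableAtFilter _ _) hfi.continuousAt
  have h2 : HasDerivAt (fun u : ℝ => Real.exp (-u)) (-Real.exp (-t)) t := by
    simpa using (hasDerivAt_neg t).exp
  have h3 := h2.mul h1
  refine h3.congr_deriv ?_
  have he : Real.exp (-t) * Real.exp t = 1 := by rw [← Real.exp_add]; simp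
  linear_combination (f t) * he

lemma avg_cont {f : ℝ → ℝ} (hf : Continuous f) :
    Continuous (fun t => Real.exp (-t) * ∫ x in (0:ℝ)..t, f x * Real.exp x) :=
  continuous_iff_continuousAt.mpr fun t => (avg_hasDeriv hf t).continuousAt

lemma avg_le {f : ℝ → ℝ} (hf : Continuous f) {t C : ℝ} (ht : 0 ≤ t)
    (hC : ∀ x ∈ Set.Icc 0 t, f x ≤ C) :
    Real.exp (-t) * ∫ x in (0:ℝ)..t, f x * Real.exp x ≤ C * (1 - Real.exp (-t)) := by
  have h1 : (∫ x in (0:ℝ)..t, f x * Real.exp x) ≤ ∫ x in (0:ℝ)..t, C * Real.exp x :=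
    intervalIntegral.integral_mono_on ht ((hf.mul Real.continuous_exp).intervalIntegrable _ _)
      ((continuous_const.mul Real.continuous_exp).intervalIntegrable _ _)
      (fun x hx => mul_le_mul_of_nonneg_right (hC x hx) (Real.exp_pos x).le)
  have h2 : (∫ x in (0:ℝ)..t, C * Real.exp x) = C * (Real.exp t - 1) := by
    rw [intervalIntegral.integral_const_mul, integral_exp]; simp
  have h3 : Real.exp (-t) * (C * (Real.exp t - 1)) = C * (1 - Real.exp (-t)) := by
    have he : Real.exp (-t) * Real.exp t = 1 := by rw [← Real.exp_add]; simp
    linear_combination C * he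
  calc Real.exp (-t) * ∫ x in (0:ℝ)..t, f x * Real.exp x
      ≤ Real.exp (-t) * (C * (Real.exp t - 1)) := by
        apply mul_le_mul_of_nonneg_left _ (Real.exp_pos _).le
        rw [← h2]; exact h1
    _ = C * (1 - Real.exp (-t)) := h3

lemma avg_ge {f : ℝ → ℝ} (hf : Continuous f) {s t c : ℝ} (hs : 0 ≤ s) (hst : s ≤ t)
    (h0 : ∀ x ∈ Set.Icc 0 s, 0 ≤ f x) (hc : ∀ x ∈ Set.Icc s t, c ≤ f x) (hc0 : 0 ≤ c) :
    c * (1 - Real.exp (s - t)) ≤ Real.exp (-t) * ∫ x in (0:ℝ)..t, f x * Real.exp x := by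
  have hfi : Continuous fun x => f x * Real.exp x := hf.mul Real.continuous_exp
  have hsplit : (∫ x in (0:ℝ)..t, f x * Real.exp x)
      = (∫ x in (0:ℝ)..s, f x * Real.exp x) + ∫ x in s..t, f x * Real.exp x :=
    (intervalIntegral.integral_add_adjacent_intervals (hfi.intervalIntegrable _ _)
      (hfi.intervalIntegrable _ _)).symm
  have h1 : 0 ≤ ∫ x in (0:ℝ)..s, f x * Real.exp x :=
    intervalIntegral.integral_nonneg hs (fun x hx => mul_nonneg (h0 x hx) (Real.exp_pos _).le)
  have h2 : c * (Real.exp t - Real.exp s) ≤ ∫ x in s..t, f x * Real.exp x := by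
    have h := intervalIntegral.integral_mono_on (μ := volume) hst
      ((continuous_const.mul Real.continuous_exp).intervalIntegrable _ _)
      (hfi.intervalIntegrable _ _)
      (fun x hx => mul_le_mul_of_nonneg_right (hc x hx) (Real.exp_pos x).le)
    simp only [Pi.mul_apply] at h
    rwa [intervalIntegral.integral_const_mul, integral_exp] at h
  have h3 : Real.exp (-t) * (c * (Real.exp t - Real.exp s)) = c * (1 - Real.exp (s - t)) := by
    rw [show s - t = s + -t by ring, Real.exp_add]
    have he : Real.exp (-t) * Real.exp t = 1 := by rw [← Real.exp_add]; simp
    linear_combination c * he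
  calc c * (1 - Real.exp (s - t)) = Real.exp (-t) * (c * (Real.exp t - Real.exp s)) := h3.symm
    _ ≤ Real.exp (-t) * ∫ x in (0:ℝ)..t, f x * Real.exp x := by
        apply mul_le_mul_of_nonneg_left _ (Real.exp_pos _).le
        rw [hsplit]; linarith



section Props

variable {a : ℕ → ℝ}

lemma props (haI : ∀ j, a j ∈ Set.Icc (0:ℝ) 1) : ∀ r : ℕ,
    Continuous (Nval a 1 r) ∧ MonotoneOn (Nval a 1 r) (Set.Ici 0) ∧
    (∀ t, 0 ≤ t → 0 ≤ Nval a 1 r t ∧ Nval a 1 r t ≤ r) := by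
  intro r
  induction r using Nat.strong_induction_on with
  | _ r ih =>
    -- Nstar properties for all m < r
    have Sprops : ∀ m < r, Continuous (Nstar a 1 m) ∧ MonotoneOn (Nstar a 1 m) (Set.Ici 0) ∧
        (∀ t, 0 ≤ t → 0 ≤ Nstar a 1 m t ∧ Nstar a 1 m t ≤ Nval a 1 m t ∧ Nstar a 1 m t ≤ m) := by
      intro m hm
      obtain ⟨hNc, hNm, hNb⟩ := ih m hm
      have hrepr : Nstar a 1 m = fun t => Real.exp (-t) * ∫ x in (0:ℝ)..t, Nval a 1 m x * Real.exp x := rfl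
      have hSc : Continuous (Nstar a 1 m) := by rw [hrepr]; exact avg_cont hNc
      have hSnn : ∀ t, 0 ≤ t → 0 ≤ Nstar a 1 m t := by
        intro t ht
        exact intervalIntegral.integral_nonneg ht (fun x hx => mul_nonneg ((hNb x hx.1).1)
          (Real.exp_pos _).le) |>.trans_eq' (by simp) |> fun h => mul_nonneg (Real.exp_pos _).le h
      have hSleN : ∀ t, 0 ≤ t → Nstar a 1 m t ≤ Nval a 1 m t := by
        intro t ht
        have h1 : Nstar a 1 m t ≤ Nval a 1 m t * (1 - Real.exp (-t)) :=
          avg_le hNc ht (fun x hx => hNm hx.1 ht hx.2)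
        have h2 : Nval a 1 m t * (1 - Real.exp (-t)) ≤ Nval a 1 m t := by
          have h0 := (hNb t ht).1
          nlinarith [Real.exp_pos (-t)]
        linarith
      have hSleM : ∀ t, 0 ≤ t → Nstar a 1 m t ≤ m := by
        intro t ht
        have h1 : Nstar a 1 m t ≤ (m:ℝ) * (1 - Real.exp (-t)) :=
          avg_le hNc ht (fun x hx => (hNb x hx.1).2)
        nlinarith [Real.exp_pos (-t), (Nat.cast_nonneg m : (0:ℝ) ≤ m)]
      have hSm : MonotoneOn (Nstar a 1 m) (Set.Ici 0) := by
        apply monotoneOn_of_hasDerivWithinAt_nonneg (convex_Ici 0) hSc.continuousOn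
          (f' := fun t => Nval a 1 m t - Nstar a 1 m t)
        · intro x hx
          exact ((avg_hasDeriv hNc x).hasDerivWithinAt : HasDerivWithinAt _ _ _ x)
        · intro x hx
          rw [interior_Ici] at hx
          have := hSleN x (le_of_lt hx)
          linarith
      exact ⟨hSc, hSm, fun t ht => ⟨hSnn t ht, hSleN t ht, hSleM t ht⟩⟩
    match r with
    | 0 =>
      refine ⟨continuous_const, ?_, ?_⟩
      · intro x _ y _ _; simp [Nval_zero]
      · intro t _; simp [Nval_zero]
    | (n+1) =>
      have hne := Finset.nonempty_Icc.mpr (Nat.succ_le_succ (Nat.zero_le n))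
      have hmem : ∀ j ∈ Finset.Icc 1 (n+1), n + 1 - j < n + 1 := by
        intro j hj; simp only [Finset.mem_Icc] at hj; omega
      have hNrepr : Nval a 1 (n+1) = fun t => (Finset.Icc 1 (n+1)).sup' hne
          (fun j => a j + Nstar a 1 (n + 1 - j) t) := funext (fun t => Nval_succ_one a n t)
      refine ⟨?_, ?_, ?_⟩
      · rw [hNrepr]
        exact Continuous.finset_sup'_apply hne (fun j hj =>
          continuous_const.add (Sprops _ (hmem j hj)).1)
      · intro x hx y hy hxy
        rw [hNrepr]
        dsimp only
        obtain ⟨i, hi, hie⟩ := Finset.exists_mem_eq_sup' hne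
          (fun j => a j + Nstar a 1 (n + 1 - j) x)
        rw [hie]
        calc a i + Nstar a 1 (n + 1 - i) x ≤ a i + Nstar a 1 (n + 1 - i) y := by
              have := (Sprops _ (hmem i hi)).2.1 hx hy hxy
              linarith
          _ ≤ _ := Finset.le_sup' (fun j => a j + Nstar a 1 (n + 1 - j) y) hi
      · intro t ht
        constructor
        · have h1 : a 1 + Nstar a 1 (n + 1 - 1) t ≤ Nval a 1 (n+1) t :=
            Nval_ge a n t le_rfl (Nat.succ_le_succ (Nat.zero_le n))
          have h2 : 0 ≤ Nstar a 1 (n + 1 - 1) t := ((Sprops _ (by omega)).2.2 t ht).1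
          have h3 : 0 ≤ a 1 := (haI 1).1
          linarith
        · rw [hNrepr]
          apply Finset.sup'_le
          intro j hj
          simp only [Finset.mem_Icc] at hj
          have h1 : a j ≤ 1 := (haI j).2
          have h2 : Nstar a 1 (n + 1 - j) t ≤ ((n + 1 - j : ℕ) : ℝ) := by
            have h3 := ((Sprops _ (by omega : n + 1 - j < n + 1)).2.2 t ht).2.2
            have h4 : Nval a 1 (n + 1 - j) t ≤ ((n + 1 - j : ℕ) : ℝ) :=
              (ih _ (by omega) |>.2.2 t ht).2
            linarith
          have h5 : ((n + 1 - j : ℕ) : ℝ) ≤ n := by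
            have : n + 1 - j ≤ n := by omega
            exact_mod_cast this
          push_cast
          linarith

end Props

section Super

variable {a : ℕ → ℝ}

lemma incr_anti (hconc : ∀ j : ℕ, a (j + 2) - a (j + 1) < a (j + 1) - a j)
    {i k : ℕ} (h : i ≤ k) : a (k+1) - a k ≤ a (i+1) - a i := by
  induction k with
  | zero =>
    have hi0 : i = 0 := by omega
    subst hi0; exact le_rfl
  | succ k ihk =>
    rcases Nat.lt_or_ge i (k+1) with hik | hik
    · have h1 := ihk (by omega)
      have h2 := hconc k
      linarith
    · have hik1 : i = k + 1 := by omega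
      subst hik1; exact le_rfl

lemma incr_anti_strict (hconc : ∀ j : ℕ, a (j + 2) - a (j + 1) < a (j + 1) - a j)
    {i k : ℕ} (h : i < k) : a (k+1) - a k < a (i+1) - a i := by
  induction k with
  | zero => omega
  | succ k ihk =>
    rcases Nat.lt_or_ge i k with hik | hik
    · have h1 := ihk hik
      have h2 := hconc k
      linarith
    · have hik1 : i = k := by omega
      subst hik1; exact hconc i

lemma f_lb (ha0 : a 0 = 0) (hconc : ∀ j : ℕ, a (j + 2) - a (j + 1) < a (j + 1) - a j) :
    ∀ r : ℕ, ∀ t : ℝ, 0 ≤ t → a (r+1) - a r ≤ Nval a 1 (r+1) t - Nval a 1 r t := by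
  intro r t ht
  match r with
  | 0 => simp [Nval_one, Nval_zero, ha0]
  | (m+1) =>
    obtain ⟨j, hj1, hj2, hje⟩ := Nval_opt a m t
    have hA : a (j+1) + Nstar a 1 (m + 2 - (j+1)) t ≤ Nval a 1 (m+2) t :=
      Nval_ge a (m+1) t (by omega) (by omega)
    have e1 : m + 2 - (j+1) = m + 1 - j := by omega
    rw [e1] at hA
    have h2 : a (m+2) - a (m+1) ≤ a (j+1) - a j := incr_anti hconc (by omega)
    linarith

lemma superQ (haI : ∀ j, a j ∈ Set.Icc (0:ℝ) 1) (ha0 : a 0 = 0) (hmono : StrictMono a)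
    (hconc : ∀ j : ℕ, a (j + 2) - a (j + 1) < a (j + 1) - a j) : ∀ r : ℕ,
    (∀ s t : ℝ, 0 ≤ s → s ≤ t →
      Nval a 1 (r+1) s + Nval a 1 r t ≤ Nval a 1 (r+1) t + Nval a 1 r s) ∧
    (∀ s t : ℝ, 0 ≤ s → s ≤ t →
      Nstar a 1 (r+1) s + Nstar a 1 r t ≤ Nstar a 1 (r+1) t + Nstar a 1 r s) := by
  intro r
  induction r using Nat.strong_induction_on with
  | _ r ih =>
    have chain : ∀ m2, m2 ≤ r → ∀ m1, m1 ≤ m2 → ∀ s t : ℝ, 0 ≤ s → s ≤ t →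
        Nstar a 1 m1 t - Nstar a 1 m1 s ≤ Nstar a 1 m2 t - Nstar a 1 m2 s := by
      intro m2
      induction m2 with
      | zero =>
        intro _ m1 h1 s t hs hst
        have : m1 = 0 := by omega
        subst this; exact le_rfl
      | succ m2 ihm =>
        intro hm2r m1 hm1 s t hs hst
        rcases Nat.lt_or_ge m1 (m2+1) with h | h
        · have h1 := ihm (by omega) m1 (by omega) s t hs hst
          have h2 := (ih m2 (by omega)).2 s t hs hst
          linarith
        · have : m1 = m2 + 1 := by omega
          subst this; exact le_rfl
    have Qf : ∀ s t : ℝ, 0 ≤ s → s ≤ t →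
        Nval a 1 (r+1) s + Nval a 1 r t ≤ Nval a 1 (r+1) t + Nval a 1 r s := by
      match r with
      | 0 => intro s t hs hst; rw [Nval_one, Nval_one]; simp [Nval_zero]
      | (m+1) =>
        intro s t hs hst
        obtain ⟨j1, hj11, hj12, hj1e⟩ := Nval_opt a m t
        obtain ⟨j2, hj21, hj22, hj2e⟩ := Nval_opt a (m+1) s
        rcases le_or_gt j2 (j1+1) with hcase | hcase
        · have hA : a j2 + Nstar a 1 (m + 2 - j2) t ≤ Nval a 1 (m+2) t :=
            Nval_ge a (m+1) t hj21 hj22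
          have hB : a j1 + Nstar a 1 (m + 1 - j1) s ≤ Nval a 1 (m+1) s :=
            Nval_ge a m s hj11 hj12
          have hC : Nstar a 1 (m+1-j1) t - Nstar a 1 (m+1-j1) s
              ≤ Nstar a 1 (m+2-j2) t - Nstar a 1 (m+2-j2) s :=
            chain (m+2-j2) (by omega) (m+1-j1) (by omega) s t hs hst
          linarith
        · have hA : a (j1+1) + Nstar a 1 (m + 2 - (j1+1)) t ≤ Nval a 1 (m+2) t :=
            Nval_ge a (m+1) t (by omega) (by omega)
          have hB : a (j2-1) + Nstar a 1 (m + 1 - (j2-1)) s ≤ Nval a 1 (m+1) s :=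
            Nval_ge a m s (by omega) (by omega)
          have e1 : m + 2 - (j1+1) = m + 1 - j1 := by omega
          have e2 : m + 1 - (j2-1) = m + 2 - j2 := by omega
          rw [e1] at hA; rw [e2] at hB
          have hconc' : a j2 - a (j2-1) ≤ a (j1+1) - a j1 := by
            have h := incr_anti hconc (show j1 ≤ j2 - 1 by omega)
            rw [show j2 - 1 + 1 = j2 by omega] at h
            exact h
          linarith
    refine ⟨Qf, ?_⟩
    have hNc1 : Continuous (Nval a 1 (r+1)) := (props haI (r+1)).1
    have hNc0 : Continuous (Nval a 1 r) := (props haI r).1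
    have hfc : Continuous (fun x => Nval a 1 (r+1) x - Nval a 1 r x) := hNc1.sub hNc0
    have key : ∀ t : ℝ, Nstar a 1 (r+1) t - Nstar a 1 r t
        = Real.exp (-t) * ∫ x in (0:ℝ)..t, (Nval a 1 (r+1) x - Nval a 1 r x) * Real.exp x := by
      intro t
      show Real.exp (-t) * (∫ x in (0:ℝ)..t, Nval a 1 (r+1) x * Real.exp x)
          - Real.exp (-t) * (∫ x in (0:ℝ)..t, Nval a 1 r x * Real.exp x) = _
      rw [← mul_sub, ← intervalIntegral.integral_sub (f := fun x => Nval a 1 (r+1) x * Real.exp x)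
        (g := fun x => Nval a 1 r x * Real.exp x)
        ((hNc1.mul Real.continuous_exp).intervalIntegrable _ _)
        ((hNc0.mul Real.continuous_exp).intervalIntegrable _ _)]
      congr 1
      apply intervalIntegral.integral_congr
      intro x hx
      ring
    have hflb : ∀ x : ℝ, 0 ≤ x → a (r+1) - a r ≤ Nval a 1 (r+1) x - Nval a 1 r x :=
      fun x hx => f_lb ha0 hconc r x hx
    have hgap : 0 < a (r+1) - a r := sub_pos.mpr (hmono (Nat.lt_succ_self r))
    have hgle : ∀ t : ℝ, 0 ≤ t → Nstar a 1 (r+1) t - Nstar a 1 r t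
        ≤ Nval a 1 (r+1) t - Nval a 1 r t := by
      intro t ht
      rw [key t]
      have h1 := avg_le (C := Nval a 1 (r+1) t - Nval a 1 r t) hfc ht (fun x hx => by
        have := Qf x t hx.1 hx.2; linarith)
      have h2 : 0 ≤ Nval a 1 (r+1) t - Nval a 1 r t := le_trans hgap.le (hflb t ht)
      nlinarith [Real.exp_pos (-t)]
    have hg : MonotoneOn (fun t => Nstar a 1 (r+1) t - Nstar a 1 r t) (Set.Ici 0) := by
      apply monotoneOn_of_hasDerivWithinAt_nonneg (convex_Ici 0)
        (f' := fun t => (Nval a 1 (r+1) t - Nval a 1 r t) - (Nstar a 1 (r+1) t - Nstar a 1 r t))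
      · exact ((avg_cont hNc1).sub (avg_cont hNc0)).continuousOn
      · intro x hx
        have h1 := (avg_hasDeriv hNc1 x).sub (avg_hasDeriv hNc0 x)
        have h2 : (Nval a 1 (r+1) x - Nval a 1 r x) - (Nstar a 1 (r+1) x - Nstar a 1 r x)
            = (Nval a 1 (r+1) x - Real.exp (-x) * ∫ y in (0:ℝ)..x, Nval a 1 (r+1) y * Real.exp y)
            - (Nval a 1 r x - Real.exp (-x) * ∫ y in (0:ℝ)..x, Nval a 1 r y * Real.exp y) := by
          show _ = _
          unfold Nstar
          ring
        rw [h2]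
        exact h1.hasDerivWithinAt
      · intro x hx
        rw [interior_Ici] at hx
        have := hgle x hx.le
        show 0 ≤ (Nval a 1 (r+1) x - Nval a 1 r x) - (Nstar a 1 (r+1) x - Nstar a 1 r x)
        linarith
    intro s t hs hst
    have hmem1 : s ∈ Set.Ici (0:ℝ) := hs
    have hmem2 : t ∈ Set.Ici (0:ℝ) := le_trans hs hst
    have h9 : Nstar a 1 (r+1) s - Nstar a 1 r s ≤ Nstar a 1 (r+1) t - Nstar a 1 r t :=
      hg hmem1 hmem2 hst
    linarith

end Super

section Close

variable {a : ℕ → ℝ}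

lemma close (haI : ∀ j, a j ∈ Set.Icc (0:ℝ) 1) (m : ℕ) (ε : ℝ) (hε : 0 < ε) :
    ∃ s : ℝ, 0 ≤ s ∧ Nval a 1 m s - Nstar a 1 m s < ε := by
  obtain ⟨hNc, hNm, hNb⟩ := props haI m
  set M := sSup (Nval a 1 m '' Set.Ici 0) with hMdef
  have hbdd : BddAbove (Nval a 1 m '' Set.Ici 0) := by
    refine ⟨m, ?_⟩
    rintro y ⟨x, hx, rfl⟩
    exact (hNb x hx).2
  have hne : (Nval a 1 m '' Set.Ici 0).Nonempty := ⟨Nval a 1 m 0, 0, Set.mem_Ici.mpr le_rfl, rfl⟩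
  have hM0 : 0 ≤ M := le_trans (hNb 0 le_rfl).1 (le_csSup hbdd ⟨0, Set.mem_Ici.mpr le_rfl, rfl⟩)
  have hlt : M - ε/4 < M := by linarith
  obtain ⟨y, ⟨s0, hs0, rfl⟩, hy⟩ := exists_lt_of_lt_csSup hne hlt
  have hM1 : (0:ℝ) < M + 1 := by linarith
  set η := min (ε/(4*(M+1))) (1/2) with hηdef
  have hη0 : 0 < η := lt_min (div_pos hε (by linarith)) (by norm_num)
  have hη1 : η ≤ 1/2 := min_le_right _ _
  set T := s0 + (- Real.log η) + 1 with hTdef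
  have hlogη : Real.log η ≤ 0 := Real.log_nonpos hη0.le (by linarith)
  have hsT : s0 ≤ T := by rw [hTdef]; linarith
  have hT0 : 0 ≤ T := le_trans hs0 hsT
  have hexp1 : (1:ℝ) ≤ Real.exp 1 := by nlinarith [Real.add_one_le_exp (1:ℝ)]
  have hexp : Real.exp (s0 - T) ≤ η := by
    have he : s0 - T = Real.log η - 1 := by rw [hTdef]; ring
    rw [he, Real.exp_sub, Real.exp_log hη0]
    calc η / Real.exp 1 ≤ η / 1 := by
          apply div_le_div_of_nonneg_left hη0.le one_pos
          · exact hexp1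
      _ = η := by ring
  have hST : Nval a 1 m s0 * (1 - Real.exp (s0 - T)) ≤ Nstar a 1 m T :=
    avg_ge hNc hs0 hsT (fun x hx => (hNb x hx.1).1)
      (fun x hx => hNm hs0 (le_trans hs0 hx.1) hx.1) ((hNb s0 hs0).1)
  have hNT : Nval a 1 m T ≤ M := le_csSup hbdd ⟨T, hT0, rfl⟩
  have hs0M : Nval a 1 m s0 ≤ M := le_csSup hbdd ⟨s0, hs0, rfl⟩
  refine ⟨T, hT0, ?_⟩
  have h1 : Nval a 1 m s0 * Real.exp (s0 - T) ≤ M * η :=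
    mul_le_mul hs0M hexp (Real.exp_pos _).le hM0
  have h2 : M * η ≤ M * (ε/(4*(M+1))) := mul_le_mul_of_nonneg_left (min_le_left _ _) hM0
  have key3 : M * (ε / (4 * (M + 1))) = ε/4 * (M/(M+1)) := by field_simp
  have hfrac : M/(M+1) < 1 := (div_lt_one hM1).mpr (by linarith)
  have h3 : M * (ε / (4 * (M + 1))) < ε/4 := by
    rw [key3]; nlinarith
  linarith

end Close

end IF

/-- Lemma 4.7: for the Invincible Fighter (`u = 1`), fixed `n ≥ 2` and `j = 1,…,n-1`,
the equation `N_n(j+1,t) = N_n(j,t)` has a unique solution `t(n,j) ∈ (0,∞)`;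
moreover `N_n(j+1,t) > N_n(j,t)` for `0 ≤ t < t(n,j)` and `N_n(j+1,t) < N_n(j,t)`
for `t > t(n,j)`. -/
theorem invincible_crossing
    (a : ℕ → ℝ) (haI : ∀ j, a j ∈ Set.Icc (0:ℝ) 1) (ha0 : a 0 = 0)
    (hmono : StrictMono a)
    (hconc : ∀ j : ℕ, a (j + 2) - a (j + 1) < a (j + 1) - a j)
    (n : ℕ) (hn : 2 ≤ n) :
    ∀ j : ℕ, 1 ≤ j → j + 1 ≤ n →
      ∃ tc : ℝ, 0 < tc ∧
        Nalloc a 1 n (j + 1) tc = Nalloc a 1 n j tc ∧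
        (∀ t : ℝ, 0 ≤ t → Nalloc a 1 n (j + 1) t = Nalloc a 1 n j t → t = tc) ∧
        (∀ t : ℝ, 0 ≤ t → t < tc → Nalloc a 1 n j t < Nalloc a 1 n (j + 1) t) ∧
        (∀ t : ℝ, tc < t → Nalloc a 1 n (j + 1) t < Nalloc a 1 n j t) := by
  intro j hj1 hjn
  set m := n - (j + 1) with hmdef
  have hnj : n - j = m + 1 := by omega
  set gap := a (j + 1) - a j with hgapdef
  have hgap : 0 < gap := sub_pos.mpr (hmono (lt_add_one j))
  set D : ℝ → ℝ := fun t => Nstar a 1 (m+1) t - Nstar a 1 m t with hDdef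
  have hall : ∀ t : ℝ, Nalloc a 1 n (j+1) t - Nalloc a 1 n j t = gap - D t := by
    intro t
    rw [IF.Nalloc_one, IF.Nalloc_one, ← hmdef, hnj]
    simp only [hDdef, hgapdef]
    ring
  set f : ℝ → ℝ := fun x => Nval a 1 (m+1) x - Nval a 1 m x with hfdef
  have hNc1 : Continuous (Nval a 1 (m+1)) := (IF.props haI (m+1)).1
  have hNc0 : Continuous (Nval a 1 m) := (IF.props haI m).1
  have hfc : Continuous f := hNc1.sub hNc0
  set δ := a (m+1) - a m with hδdef
  have hδ : 0 < δ := sub_pos.mpr (hmono (lt_add_one m))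
  have hflb : ∀ x : ℝ, 0 ≤ x → δ ≤ f x := fun x hx => IF.f_lb ha0 hconc m x hx
  have Qf : ∀ s t : ℝ, 0 ≤ s → s ≤ t → f s ≤ f t := by
    intro s t hs hst
    have := (IF.superQ haI ha0 hmono hconc m).1 s t hs hst
    simp only [hfdef]
    linarith
  have key : ∀ t : ℝ, D t = Real.exp (-t) * ∫ x in (0:ℝ)..t, f x * Real.exp x := by
    intro t
    show Real.exp (-t) * (∫ x in (0:ℝ)..t, Nval a 1 (m+1) x * Real.exp x)
        - Real.exp (-t) * (∫ x in (0:ℝ)..t, Nval a 1 m x * Real.exp x) = _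
    rw [← mul_sub, ← intervalIntegral.integral_sub (f := fun x => Nval a 1 (m+1) x * Real.exp x)
      (g := fun x => Nval a 1 m x * Real.exp x)
      ((hNc1.mul Real.continuous_exp).intervalIntegrable _ _)
      ((hNc0.mul Real.continuous_exp).intervalIntegrable _ _)]
    congr 1
    apply intervalIntegral.integral_congr
    intro x hx
    ring
  have hDcont : Continuous D := (IF.avg_cont hNc1).sub (IF.avg_cont hNc0)
  have hD0 : D 0 = 0 := by simp [hDdef, IF.Nstar_at_zero]
  have hDle : ∀ t : ℝ, 0 ≤ t → D t ≤ f t * (1 - Real.exp (-t)) := by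
    intro t ht
    rw [key t]
    exact IF.avg_le (C := f t) hfc ht (fun x hx => Qf x t hx.1 hx.2)
  have hDd : ∀ x : ℝ, HasDerivAt D (f x - D x) x := by
    intro x
    have h1 := (IF.avg_hasDeriv hNc1 x).sub (IF.avg_hasDeriv hNc0 x)
    have h2 : f x - D x
        = (Nval a 1 (m+1) x - Real.exp (-x) * ∫ y in (0:ℝ)..x, Nval a 1 (m+1) y * Real.exp y)
        - (Nval a 1 m x - Real.exp (-x) * ∫ y in (0:ℝ)..x, Nval a 1 m y * Real.exp y) := by
      simp only [hfdef, hDdef]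
      unfold Nstar
      ring
    rw [h2]
    exact h1
  have hstrict : StrictMonoOn D (Set.Ici 0) := by
    apply strictMonoOn_of_hasDerivWithinAt_pos (convex_Ici 0) hDcont.continuousOn
      (f' := fun x => f x - D x)
    · intro x hx
      exact (hDd x).hasDerivWithinAt
    · intro x hx
      rw [interior_Ici] at hx
      have h1 := hDle x hx.le
      have h2 := hflb x hx.le
      nlinarith [Real.exp_pos (-x)]
  have hja : gap < a 1 := by
    have := IF.incr_anti_strict hconc (show 0 < j by omega)
    rw [ha0] at this
    simp only [hgapdef]
    linarith
  set ε := a 1 - gap with hεdef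
  have hε : 0 < ε := by simp only [hεdef]; linarith
  obtain ⟨s, hs0, hcl⟩ := IF.close haI m (ε/2) (by linarith)
  have hfs : gap + ε/2 < f s := by
    have h1 : a 1 + Nstar a 1 m s ≤ Nval a 1 (m+1) s := by
      have h := IF.Nval_ge a m s le_rfl (by omega)
      rwa [show m + 1 - 1 = m by omega] at h
    have h2 : a 1 = gap + ε := by rw [hεdef]; ring
    simp only [hfdef]
    linarith
  have hgε : 0 < gap + ε/2 := by linarith
  set θ := min ((ε/2)/(gap+ε/2)) (1/2:ℝ) with hθdef
  have hθ0 : 0 < θ := lt_min (div_pos (by linarith) hgε) (by norm_num)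
  have hθle : θ * (gap + ε/2) ≤ ε/2 := by
    have h := min_le_left ((ε/2)/(gap+ε/2)) (1/2:ℝ)
    calc θ * (gap+ε/2) ≤ ((ε/2)/(gap+ε/2)) * (gap+ε/2) :=
          mul_le_mul_of_nonneg_right h hgε.le
      _ = ε/2 := by field_simp
  have hlogθ : Real.log θ ≤ 0 :=
    Real.log_nonpos hθ0.le (le_trans (min_le_right _ _) (by norm_num))
  set T := s + (- Real.log θ) + 1 with hTdef
  have hsT : s ≤ T := by rw [hTdef]; linarith
  have hT0 : 0 ≤ T := le_trans hs0 hsT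
  have hexpT : Real.exp (s - T) < θ := by
    have he : s - T = Real.log θ - 1 := by rw [hTdef]; ring
    rw [he, Real.exp_sub, Real.exp_log hθ0]
    have h1 : (1:ℝ) < Real.exp 1 := by nlinarith [Real.add_one_le_exp (1:ℝ)]
    rw [div_lt_iff₀ (by positivity)]
    nlinarith
  clear_value gap D f δ ε θ T
  have hDT : gap < D T := by
    have havg : (gap + ε/2) * (1 - Real.exp (s - T)) ≤ D T := by
      rw [key T]
      exact IF.avg_ge hfc hs0 hsT (fun x hx => le_trans hδ.le (hflb x hx.1))
        (fun x hx => le_trans hfs.le (Qf s x hs0 hx.1)) hgε.le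
    have hmul : (gap + ε/2) * Real.exp (s - T) < (gap + ε/2) * θ :=
      mul_lt_mul_of_pos_left hexpT hgε
    nlinarith [hmul, havg, hθle]
  have hIVT := intermediate_value_Icc hT0 hDcont.continuousOn
  have hmemgap : gap ∈ Set.Icc (D 0) (D T) := by
    rw [hD0]; exact ⟨hgap.le, hDT.le⟩
  obtain ⟨tc, htc, hDtc⟩ := hIVT hmemgap
  have htc0 : 0 < tc := by
    rcases lt_or_eq_of_le htc.1 with h | h
    · exact h
    · exfalso; rw [← h] at hDtc; rw [hD0] at hDtc; linarith
  refine ⟨tc, htc0, ?_, ?_, ?_, ?_⟩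
  · have h := hall tc
    rw [hDtc] at h
    linarith
  · intro t ht heq
    have h := hall t
    rw [heq] at h
    have hDt : D t = gap := by linarith
    exact hstrict.injOn (Set.mem_Ici.mpr ht) (Set.mem_Ici.mpr htc0.le) (by rw [hDt, hDtc])
  · intro t ht hlt
    have h := hstrict (Set.mem_Ici.mpr ht) (Set.mem_Ici.mpr htc0.le) hlt
    have h2 := hall t
    rw [hDtc] at h
    linarith
  · intro t hlt
    have h := hstrict (Set.mem_Ici.mpr htc0.le) (Set.mem_Ici.mpr (le_trans htc0.le hlt.le)) hlt
    have h2 := hall t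
    rw [hDtc] at h
    linarith
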